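/- arXiv:1905.03176 — 4 statements merged into one kernel-verified Lean document; each statement's English description precedes it below -/
import Mathlib

section
/- In the multi-target detection model with well-separated signals, i.e. s_k − s_{k−1} ≥ 2L−1 for all k, the deterministic identity a²_{s∗x}[l] = ρ₀ a_x²[l] holds for every 0 ≤ l ≤ L−1. -/
/-- The sequence `z` of length `m`, zero-padded to all of `ℤ`. -/
noncomputable def zpad (m : ℕ) (z : ℕ → ℝ) : ℤ → ℝ :=
  fun i => if 0 ≤ i ∧ i < (m : ℤ) then z i.toNat else 0

/-- Second-order autocorrelation of the length-`m` sequence `z` with integer shift `l`: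
`a_z²[l] = (1/m) Σ_{i=0}^{m−1} z[i] z[i+l]`, with `z` extended by zero. -/
noncomputable def acorr2 (m : ℕ) (z : ℕ → ℝ) (l : ℤ) : ℝ :=
  (1 / (m : ℝ)) * ∑ i ∈ Finset.range m, zpad m z i * zpad m z (i + l)

/-- The (zero-padded) linear convolution `s∗x` of the binary sequence `s` with the signal `x`
of length `L`, where `s` has `M` nonzero entries at the positions `p 0 < p 1 < ⋯ < p (M−1)`:
`(s∗x)[i] = Σ_k x[i − p k]`, with `x` extended by zero. -/
noncomputable def sconv (L M : ℕ) (x : ℕ → ℝ) (p : Fin M → ℕ) : ℤ → ℝ :=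
  fun i => ∑ k : Fin M, zpad L x (i - (p k : ℤ))

lemma zpad_eq_zero {m : ℕ} {z : ℕ → ℝ} {i : ℤ} (h : i < 0 ∨ (m : ℤ) ≤ i) :
    zpad m z i = 0 := by
  unfold zpad
  rw [if_neg (by omega)]

/-- Multi-target detection with well-separated signals (consecutive occurrences separated by
at least `2L−1` positions): the deterministic identity `a²_{s∗x}[l] = ρ₀ a_x²[l]` holds for
every `0 ≤ l ≤ L−1`, where `ρ₀ = ML/N` and `a²_{s∗x}[l] = (1/N) Σ_{i<N} (s∗x)[i] (s∗x)[i+l]`. -/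
theorem mtd_second_order_well_separated
    (L N M : ℕ) (hL : 0 < L) (hLN : L ≤ N) (hM : 2 ≤ M)
    (x : ℕ → ℝ) (p : Fin M → ℕ)
    (hsep : ∀ k : ℕ, ∀ hk : k + 1 < M, p ⟨k, by omega⟩ + (2 * L - 1) ≤ p ⟨k + 1, hk⟩)
    (hin : ∀ k : Fin M, p k + L ≤ N)
    (l : ℕ) (hl : l < L) :
    (1 / (N : ℝ)) * ∑ i ∈ Finset.range N, sconv L M x p i * sconv L M x p (i + l)
      = ((M : ℝ) * L / N) * acorr2 L x l := by
  have hN : 0 < N := lt_of_lt_of_le hL hLN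
  -- separation for arbitrary pairs
  have hsep' : ∀ a b : Fin M, a < b → (p a : ℤ) + (2 * (L : ℤ) - 1) ≤ p b := by
    have hstep : ∀ b : ℕ, ∀ hb : b < M, ∀ a : ℕ, ∀ ha : a < M, a < b →
        (p ⟨a, ha⟩ : ℤ) + (2 * (L : ℤ) - 1) ≤ p ⟨b, hb⟩ := by
      intro b
      induction b with
      | zero => intro hb a ha hab; omega
      | succ b ih =>
          intro hb a ha hab
          have hb' : b < M := by omega
          have hstep := hsep b hb
          rcases Nat.lt_or_ge a b with h | h
          · have := ih hb' a ha h
            have : (p ⟨a, ha⟩ : ℤ) + (2 * (L : ℤ) - 1) ≤ p ⟨b, hb'⟩ := this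
            omega
          · have hab' : a = b := by omega
            subst hab'
            omega
    intro a b hab
    have := hstep b.val b.isLt a.val a.isLt hab
    simpa using this
  set g : ℤ → ℝ := fun j => zpad L x j * zpad L x (j + l) with hg
  have hgz : ∀ j : ℤ, j < 0 ∨ (L : ℤ) ≤ j → g j = 0 := by
    intro j hj
    simp only [hg]
    rw [zpad_eq_zero hj, zero_mul]
  -- cross terms vanish
  have hvan : ∀ (i : ℤ) (k k' : Fin M), k ≠ k' →
      zpad L x (i - p k) * zpad L x (i + l - p k') = 0 := by
    intro i k k' hkk
    by_cases h1 : 0 ≤ i - (p k : ℤ) ∧ i - (p k : ℤ) < L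
    · by_cases h2 : 0 ≤ i + l - (p k' : ℤ) ∧ i + l - (p k' : ℤ) < L
      · exfalso
        rcases lt_or_gt_of_ne hkk with h | h
        · have := hsep' k k' h
          omega
        · have := hsep' k' k h
          omega
      · rw [show zpad L x (i + l - p k') = 0 from by unfold zpad; rw [if_neg h2], mul_zero]
    · rw [show zpad L x (i - p k) = 0 from by unfold zpad; rw [if_neg h1], zero_mul]
  -- diagonal reduction
  have key : ∀ i : ℤ, sconv L M x p i * sconv L M x p (i + l)
      = ∑ k : Fin M, g (i - p k) := by
    intro i
    unfold sconv
    rw [Finset.sum_mul_sum]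
    apply Finset.sum_congr rfl
    intro k _
    rw [Finset.sum_eq_single k]
    · simp only [hg]
      congr 1
      ring
    · intro k' _ hk'
      exact hvan i k k' (Ne.symm hk')
    · intro h
      exact absurd (Finset.mem_univ k) h
  -- shift identity
  have hshift : ∀ k : Fin M, ∑ i ∈ Finset.range N, g ((i : ℤ) - p k)
      = ∑ j ∈ Finset.range L, g j := by
    intro k
    have h1 : ∑ i ∈ Finset.range N, g ((i : ℤ) - p k)
        = ∑ i ∈ Finset.Ico (p k) (p k + L), g ((i : ℤ) - p k) := by
      symm
      apply Finset.sum_subset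
      · intro a ha
        simp only [Finset.mem_Ico] at ha
        simp only [Finset.mem_range]
        have := hin k
        omega
      · intro a _ hna
        simp only [Finset.mem_Ico] at hna
        apply hgz
        omega
    rw [h1, Finset.sum_Ico_eq_sum_range]
    have h2 : p k + L - p k = L := by omega
    rw [h2]
    apply Finset.sum_congr rfl
    intro j _
    congr 1
    push_cast
    ring
  have hsum : ∑ i ∈ Finset.range N, sconv L M x p i * sconv L M x p (i + l)
      = (M : ℝ) * ∑ j ∈ Finset.range L, g j := by
    calc ∑ i ∈ Finset.range N, sconv L M x p i * sconv L M x p (i + l)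
        = ∑ i ∈ Finset.range N, ∑ k : Fin M, g ((i : ℤ) - p k) :=
          Finset.sum_congr rfl fun i _ => key i
      _ = ∑ k : Fin M, ∑ i ∈ Finset.range N, g ((i : ℤ) - p k) := Finset.sum_comm
      _ = ∑ k : Fin M, ∑ j ∈ Finset.range L, g j :=
          Finset.sum_congr rfl fun k _ => hshift k
      _ = (M : ℝ) * ∑ j ∈ Finset.range L, g j := by
          rw [Finset.sum_const, Finset.card_univ, Fintype.card_fin, nsmul_eq_mul]
  have hacorr : acorr2 L x l = (1 / (L : ℝ)) * ∑ j ∈ Finset.range L, g j := rfl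
  rw [hsum, hacorr]
  have hL0 : (L : ℝ) ≠ 0 := Nat.cast_ne_zero.mpr hL.ne'
  have hN0 : (N : ℝ) ≠ 0 := Nat.cast_ne_zero.mpr hN.ne'
  field_simp
end

section
/- In the multi-target detection model, there exist absolute constants C₁, C₂ > 0 such that for every 0 ≤ l ≤ L−1 the second-order autocorrelation of the noisy measurement satisfies Var(a_y²[l]) ≤ C₁ M ‖x‖₂² σ² / N² + C₂ σ⁴ / N. In particular, if M/N stays bounded, Var(a_y²[l]) = O((σ² + σ⁴)/N). -/
open MeasureTheory ProbabilityTheory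

/-- The noise realization `ε(ω)`, zero-padded to all of `ℤ`. -/
noncomputable def epad {Ω : Type*} (N : ℕ) (ε : Fin N → Ω → ℝ) (ω : Ω) : ℤ → ℝ :=
  fun i => if h : 0 ≤ i ∧ i < (N : ℤ) then ε ⟨i.toNat, by omega⟩ ω else 0

open Real
open scoped NNReal ENNReal


lemma my_integrable_pow_exp {b : ℝ} (hb : 0 < b) (k : ℕ) :
    Integrable (fun x : ℝ => x ^ k * Real.exp (-b * x ^ 2)) := by
  have h := integrable_rpow_mul_exp_neg_mul_sq hb (s := (k : ℝ))
    (lt_of_lt_of_le neg_one_lt_zero (Nat.cast_nonneg k))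
  simpa [Real.rpow_natCast] using h

lemma my_deriv_int_zero {b : ℝ} (hb : 0 < b) (n : ℕ) :
    (n : ℝ) * (∫ x : ℝ, x ^ (n - 1) * Real.exp (-b * x ^ 2))
      - 2 * (b * ∫ x : ℝ, x ^ (n + 1) * Real.exp (-b * x ^ 2)) = 0 := by
  have hderiv : ∀ x : ℝ, HasDerivAt (fun x : ℝ => x ^ n * Real.exp (-b * x ^ 2))
      ((n : ℝ) * x ^ (n - 1) * Real.exp (-b * x ^ 2)
        - 2 * b * (x ^ (n + 1) * Real.exp (-b * x ^ 2))) x := by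
    intro x
    have h1 : HasDerivAt (fun x : ℝ => x ^ n) ((n : ℝ) * x ^ (n - 1)) x := hasDerivAt_pow n x
    have h2 : HasDerivAt (fun x : ℝ => Real.exp (-b * x ^ 2))
        (Real.exp (-b * x ^ 2) * (-b * (2 * x))) x := by
      have h3 : HasDerivAt (fun x : ℝ => -b * x ^ 2) (-b * (2 * x)) x := by
        simpa using ((hasDerivAt_pow 2 x).const_mul (-b))
      exact h3.exp
    have : HasDerivAt (fun x : ℝ => x ^ n * Real.exp (-b * x ^ 2)) _ x := h1.mul h2
    convert this using 1
    ring
  have hint : Integrable (fun x : ℝ => (n : ℝ) * x ^ (n - 1) * Real.exp (-b * x ^ 2)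
      - 2 * b * (x ^ (n + 1) * Real.exp (-b * x ^ 2))) := by
    apply Integrable.sub
    · simpa [mul_assoc] using ((my_integrable_pow_exp hb (n - 1)).const_mul (n : ℝ))
    · exact (my_integrable_pow_exp hb (n + 1)).const_mul (2 * b)
  have hz := integral_eq_zero_of_hasDerivAt_of_integrable hderiv hint (my_integrable_pow_exp hb n)
  rw [integral_sub (by simpa [mul_assoc] using ((my_integrable_pow_exp hb (n - 1)).const_mul (n : ℝ)))
    ((my_integrable_pow_exp hb (n + 1)).const_mul (2 * b))] at hz
  simp only [mul_assoc, integral_const_mul] at hz ⊢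
  exact hz

section gauss
variable {v : ℝ≥0}

lemma my_pdf_eq (hv : 0 < (v : ℝ)) (x : ℝ) :
    gaussianPDFReal 0 v x
      = (Real.sqrt (2 * π * v))⁻¹ * Real.exp (-(2 * (v:ℝ))⁻¹ * x ^ 2) := by
  simp only [gaussianPDFReal_def]
  have h : -(x - 0) ^ 2 / (2 * (v:ℝ)) = -(2 * (v:ℝ))⁻¹ * x ^ 2 := by
    rw [sub_zero, neg_div, div_eq_mul_inv]; ring
  rw [h]

lemma my_integral_gaussianReal (hv : 0 < (v : ℝ)) (g : ℝ → ℝ) :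
    ∫ x, g x ∂(gaussianReal 0 v) = ∫ x, gaussianPDFReal 0 v x * g x := by
  rw [gaussianReal_of_var_ne_zero 0 (by exact_mod_cast hv.ne')]
  have h1 : (gaussianPDF 0 v)
      = fun x => ((Real.toNNReal (gaussianPDFReal 0 v x) : ℝ≥0) : ℝ≥0∞) := rfl
  rw [h1, integral_withDensity_eq_integral_smul
    ((measurable_gaussianPDFReal 0 v).real_toNNReal) g]
  congr 1; ext x
  rw [NNReal.smul_def, smul_eq_mul, Real.coe_toNNReal _ (gaussianPDFReal_nonneg 0 v x)]

lemma my_integrable_gaussianReal_iff (hv : 0 < (v : ℝ)) (g : ℝ → ℝ) :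
    Integrable g (gaussianReal 0 v)
      ↔ Integrable (fun x => gaussianPDFReal 0 v x * g x) := by
  rw [gaussianReal_of_var_ne_zero 0 (by exact_mod_cast hv.ne')]
  have h1 : (gaussianPDF 0 v)
      = fun x => ((Real.toNNReal (gaussianPDFReal 0 v x) : ℝ≥0) : ℝ≥0∞) := rfl
  rw [h1, integrable_withDensity_iff_integrable_smul
    ((measurable_gaussianPDFReal 0 v).real_toNNReal)]
  constructor <;> intro h <;>
  · apply h.congr
    filter_upwards with x
    simp [NNReal.smul_def, Real.coe_toNNReal _ (gaussianPDFReal_nonneg 0 v x)]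

lemma my_integrable_pow_gaussianReal (hv : 0 < (v : ℝ)) (k : ℕ) :
    Integrable (fun x => x ^ k) (gaussianReal 0 v) := by
  rw [my_integrable_gaussianReal_iff hv]
  have hb : 0 < (2 * (v:ℝ))⁻¹ := by positivity
  have h := (my_integrable_pow_exp hb k).const_mul (Real.sqrt (2 * π * (v:ℝ)))⁻¹
  apply h.congr
  filter_upwards with x
  rw [my_pdf_eq hv]
  ring

lemma my_integral_pow_gaussianReal (hv : 0 < (v : ℝ)) (k : ℕ) :
    ∫ x, x ^ k ∂(gaussianReal 0 v)
      = (Real.sqrt (2 * π * (v:ℝ)))⁻¹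
        * ∫ x : ℝ, x ^ k * Real.exp (-(2 * (v:ℝ))⁻¹ * x ^ 2) := by
  rw [my_integral_gaussianReal hv, ← integral_const_mul]
  congr 1; ext x; rw [my_pdf_eq hv]; ring

lemma my_gauss_m1 (hv : 0 < (v : ℝ)) : ∫ x, x ∂(gaussianReal 0 v) = 0 := by
  have hb : 0 < (2 * (v:ℝ))⁻¹ := by positivity
  have h := my_deriv_int_zero hb 0
  simp only [Nat.cast_zero, zero_mul, zero_sub, neg_eq_zero, zero_add, pow_one] at h
  have h2 := my_integral_pow_gaussianReal hv 1
  simp only [pow_one] at h2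
  rw [h2]
  rcases mul_eq_zero.1 h with h' | h'
  · norm_num at h'
  · rcases mul_eq_zero.1 h' with h'' | h''
    · exact absurd h'' hb.ne'
    · rw [h'', mul_zero]

lemma my_gauss_c0 (hv : 0 < (v : ℝ)) :
    (Real.sqrt (2 * π * (v:ℝ)))⁻¹
      * (∫ x : ℝ, x ^ 0 * Real.exp (-(2 * (v:ℝ))⁻¹ * x ^ 2)) = 1 := by
  rw [← my_integral_pow_gaussianReal hv 0]
  simp

lemma my_gauss_cI2 (hv : 0 < (v : ℝ)) :
    (Real.sqrt (2 * π * (v:ℝ)))⁻¹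
      * (∫ x : ℝ, x ^ 2 * Real.exp (-(2 * (v:ℝ))⁻¹ * x ^ 2)) = (v : ℝ) := by
  have hvne : (v:ℝ) ≠ 0 := hv.ne'
  have hb : 0 < (2 * (v:ℝ))⁻¹ := by positivity
  set b := (2 * (v:ℝ))⁻¹ with hbdef
  have h := my_deriv_int_zero hb 1
  have e1 : (1:ℕ) - 1 = 0 := rfl
  have e2 : (1:ℕ) + 1 = 2 := rfl
  rw [e1, e2, Nat.cast_one, one_mul] at h
  set c := (Real.sqrt (2 * π * (v:ℝ)))⁻¹ with hcdef
  set I0 := ∫ x : ℝ, x ^ 0 * Real.exp (-b * x ^ 2) with hI0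
  set I2 := ∫ x : ℝ, x ^ 2 * Real.exp (-b * x ^ 2) with hI2
  have hc := my_gauss_c0 hv
  have hb2 : 2 * b = (v:ℝ)⁻¹ := by rw [hbdef, mul_inv]; field_simp
  have h3 : (v:ℝ)⁻¹ * I2 = I0 := by rw [← hb2]; linarith
  have hI : I2 = (v:ℝ) * I0 := by
    have h4 := congrArg (fun t => (v:ℝ) * t) h3
    simpa [← mul_assoc, mul_inv_cancel₀ hvne] using h4
  rw [hI, show c * ((v:ℝ) * I0) = (c * I0) * (v:ℝ) from by ring, hc, one_mul]

lemma my_gauss_m2 (hv : 0 < (v : ℝ)) :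
    ∫ x, x ^ 2 ∂(gaussianReal 0 v) = (v : ℝ) := by
  rw [my_integral_pow_gaussianReal hv 2]
  exact my_gauss_cI2 hv

lemma my_gauss_m4 (hv : 0 < (v : ℝ)) :
    ∫ x, x ^ 4 ∂(gaussianReal 0 v) = 3 * (v : ℝ) ^ 2 := by
  have hvne : (v:ℝ) ≠ 0 := hv.ne'
  have hb : 0 < (2 * (v:ℝ))⁻¹ := by positivity
  set b := (2 * (v:ℝ))⁻¹ with hbdef
  have h := my_deriv_int_zero hb 3
  have e1 : (3:ℕ) - 1 = 2 := rfl
  have e2 : (3:ℕ) + 1 = 4 := rfl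
  rw [e1, e2] at h
  simp only [Nat.cast_ofNat] at h
  rw [my_integral_pow_gaussianReal hv 4]
  set c := (Real.sqrt (2 * π * (v:ℝ)))⁻¹ with hcdef
  set I2 := ∫ x : ℝ, x ^ 2 * Real.exp (-b * x ^ 2) with hI2
  set I4 := ∫ x : ℝ, x ^ 4 * Real.exp (-b * x ^ 2) with hI4
  have hcI2 := my_gauss_cI2 hv
  have hb2 : 2 * b = (v:ℝ)⁻¹ := by rw [hbdef, mul_inv]; field_simp
  have h3 : (v:ℝ)⁻¹ * I4 = 3 * I2 := by rw [← hb2]; linarith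
  have hI : I4 = (v:ℝ) * (3 * I2) := by
    have h4 := congrArg (fun t => (v:ℝ) * t) h3
    simpa [← mul_assoc, mul_inv_cancel₀ hvne] using h4
  rw [hI, show c * ((v:ℝ) * (3 * I2)) = 3 * (c * I2) * (v:ℝ) from by ring, hcI2]
  ring

end gauss

section rv
variable {Ω : Type} [MeasurableSpace Ω] {P : Measure Ω} [IsProbabilityMeasure P]
variable {v : ℝ≥0} {X : Ω → ℝ}

lemma my_rv_int (hv : 0 < (v:ℝ)) (hX : Measurable X)
    (hmap : Measure.map X P = gaussianReal 0 v) (k : ℕ) :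
    Integrable (fun ω => X ω ^ k) P := by
  have h := my_integrable_pow_gaussianReal hv k
  rw [← hmap, integrable_map_measure (by fun_prop) hX.aemeasurable] at h
  exact h

lemma my_rv_moment (hv : 0 < (v:ℝ)) (hX : Measurable X)
    (hmap : Measure.map X P = gaussianReal 0 v) (k : ℕ) :
    ∫ ω, X ω ^ k ∂P = ∫ x, x ^ k ∂(gaussianReal 0 v) := by
  rw [← hmap, integral_map hX.aemeasurable (by fun_prop)]

lemma my_rv_mean (hv : 0 < (v:ℝ)) (hX : Measurable X)
    (hmap : Measure.map X P = gaussianReal 0 v) :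
    ∫ ω, X ω ∂P = 0 := by
  have h := my_gauss_m1 (v := v) hv
  rw [← hmap, integral_map (f := fun x : ℝ => x) hX.aemeasurable measurable_id.aestronglyMeasurable] at h
  exact h

lemma my_rv_memL2 (hv : 0 < (v:ℝ)) (hX : Measurable X)
    (hmap : Measure.map X P = gaussianReal 0 v) :
    MemLp X 2 P :=
  (memLp_two_iff_integrable_sq hX.aestronglyMeasurable).2 (my_rv_int hv hX hmap 2)

lemma my_rv_var (hv : 0 < (v:ℝ)) (hX : Measurable X)
    (hmap : Measure.map X P = gaussianReal 0 v) :
    variance X P = (v : ℝ) := by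
  rw [variance_eq_sub (my_rv_memL2 hv hX hmap)]
  have h2 : (∫ ω, (X ^ 2) ω ∂P) = (v : ℝ) := by
    simp only [Pi.pow_apply]
    rw [my_rv_moment hv hX hmap 2]
    exact my_gauss_m2 hv
  rw [h2, my_rv_mean hv hX hmap]
  ring

lemma my_variance_const_add (A : ℝ) (Y : Ω → ℝ) (hY : Integrable Y P) :
    variance (fun ω => A + Y ω) P = variance Y P := by
  have h : (∫ ω, (A + Y ω) ∂P) = A + ∫ ω, Y ω ∂P := by
    rw [integral_add (integrable_const A) hY, integral_const]
    simp
  unfold ProbabilityTheory.variance ProbabilityTheory.evariance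
  congr 1
  apply lintegral_congr
  intro ω
  rw [h]
  congr 2
  ring

lemma my_variance_add_le (X Y : Ω → ℝ) (hX : MemLp X 2 P) (hY : MemLp Y 2 P) :
    variance (fun ω => X ω + Y ω) P ≤ 2 * variance X P + 2 * variance Y P := by
  set mX := ∫ ω, X ω ∂P with hmX
  set mY := ∫ ω, Y ω ∂P with hmY
  have hX' : MemLp (fun ω => X ω - mX) 2 P := hX.sub (memLp_const mX)
  have hY' : MemLp (fun ω => Y ω - mY) 2 P := hY.sub (memLp_const mY)
  have hvarX : variance (fun ω => X ω - mX) P = variance X P := by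
    have e : (fun ω => X ω - mX) = fun ω => (-mX) + X ω := by funext ω; ring
    rw [e, my_variance_const_add _ _ (hX.integrable one_le_two)]
  have hvarY : variance (fun ω => Y ω - mY) P = variance Y P := by
    have e : (fun ω => Y ω - mY) = fun ω => (-mY) + Y ω := by funext ω; ring
    rw [e, my_variance_const_add _ _ (hY.integrable one_le_two)]
  have e : (fun ω => X ω + Y ω)
      = fun ω => (mX + mY) + ((X ω - mX) + (Y ω - mY)) := by funext ω; ring
  rw [e, my_variance_const_add (mX + mY) (fun ω => (X ω - mX) + (Y ω - mY)) ((hX'.add hY').integrable one_le_two)]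
  have h1 : variance (fun ω => (X ω - mX) + (Y ω - mY)) P
      ≤ ∫ ω, ((X ω - mX) + (Y ω - mY)) ^ 2 ∂P := by
    have := variance_le_expectation_sq (μ := P)
      (X := fun ω => (X ω - mX) + (Y ω - mY)) (hX'.add hY').aestronglyMeasurable
    exact this
  have h2 : ∫ ω, ((X ω - mX) + (Y ω - mY)) ^ 2 ∂P
      ≤ ∫ ω, (2 * (X ω - mX) ^ 2 + 2 * (Y ω - mY) ^ 2) ∂P := by
    apply integral_mono ((hX'.add hY').integrable_sq)
    · exact ((hX'.integrable_sq.const_mul 2).add (hY'.integrable_sq.const_mul 2))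
    · intro ω
      dsimp
      nlinarith [sq_nonneg ((X ω - mX) - (Y ω - mY))]
  have h3 : ∫ ω, (2 * (X ω - mX) ^ 2 + 2 * (Y ω - mY) ^ 2) ∂P
      = 2 * (∫ ω, (X ω - mX) ^ 2 ∂P) + 2 * ∫ ω, (Y ω - mY) ^ 2 ∂P := by
    rw [integral_add (hX'.integrable_sq.const_mul 2) (hY'.integrable_sq.const_mul 2),
      integral_const_mul, integral_const_mul]
  have h4 : ∫ ω, (X ω - mX) ^ 2 ∂P = variance X P := by
    rw [← hvarX, variance_eq_sub hX']
    have hm : ∫ ω, (X ω - mX) ∂P = 0 := by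
      rw [integral_sub (hX.integrable one_le_two) (integrable_const mX), integral_const]
      simp [hmX]
    simp only [Pi.pow_apply]
    rw [hm]
    ring
  have h5 : ∫ ω, (Y ω - mY) ^ 2 ∂P = variance Y P := by
    rw [← hvarY, variance_eq_sub hY']
    have hm : ∫ ω, (Y ω - mY) ∂P = 0 := by
      rw [integral_sub (hY.integrable one_le_two) (integrable_const mY), integral_const]
      simp [hmY]
    simp only [Pi.pow_apply]
    rw [hm]
    ring
  calc variance (fun ω => (X ω - mX) + (Y ω - mY)) P
      ≤ ∫ ω, ((X ω - mX) + (Y ω - mY)) ^ 2 ∂P := h1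
    _ ≤ ∫ ω, (2 * (X ω - mX) ^ 2 + 2 * (Y ω - mY) ^ 2) ∂P := h2
    _ = 2 * (∫ ω, (X ω - mX) ^ 2 ∂P) + 2 * ∫ ω, (Y ω - mY) ^ 2 ∂P := h3
    _ = 2 * variance X P + 2 * variance Y P := by rw [h4, h5]

end rv

lemma my_epad_lt {Ω : Type*} {N : ℕ} (ε : Fin N → Ω → ℝ) (ω : Ω) {i : ℕ} (h : i < N) :
    epad N ε ω (i : ℤ) = ε ⟨i, h⟩ ω := by
  rw [epad, dif_pos ⟨by positivity, by exact_mod_cast h⟩]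
  congr 1

lemma my_epad_ge {Ω : Type*} {N : ℕ} (ε : Fin N → Ω → ℝ) (ω : Ω) {i : ℕ} (h : N ≤ i) :
    epad N ε ω (i : ℤ) = 0 := by
  rw [epad, dif_neg]
  rintro ⟨-, h2⟩
  have : (N : ℤ) ≤ (i : ℤ) := by exact_mod_cast h
  omega

lemma my_zpad_lt {m : ℕ} (z : ℕ → ℝ) {i : ℕ} (h : i < m) :
    zpad m z (i : ℤ) = z i := by
  rw [zpad, if_pos ⟨by positivity, by exact_mod_cast h⟩]
  simp

lemma my_zpad_ne_zero {m : ℕ} {z : ℕ → ℝ} {t : ℤ} (h : zpad m z t ≠ 0) :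
    0 ≤ t ∧ t < (m : ℤ) := by
  by_contra hc
  exact h (by rw [zpad, if_neg hc])

lemma my_shift_sum (N l : ℕ) (hlN : l ≤ N) (f : ℕ → ℝ) (hf : ∀ t, N ≤ t → f t = 0) :
    ∑ i ∈ Finset.range N, f (i + l) = ∑ t ∈ Finset.range N, (if l ≤ t then f t else 0) := by
  have h1 : ∑ t ∈ Finset.Ico l (N + l), f t = ∑ i ∈ Finset.range N, f (l + i) := by
    rw [Finset.sum_Ico_eq_sum_range]
    simp
  have h2 : ∑ t ∈ Finset.Ico l (N + l), f t
      = ∑ t ∈ Finset.Ico l N, f t + ∑ t ∈ Finset.Ico N (N + l), f t :=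
    (Finset.sum_Ico_consecutive _ hlN (Nat.le_add_right N l)).symm
  have h3 : ∑ t ∈ Finset.Ico N (N + l), f t = 0 :=
    Finset.sum_eq_zero (fun t ht => hf t (Finset.mem_Ico.1 ht).1)
  have h4 : Finset.Ico l N = (Finset.range N).filter (fun t => l ≤ t) := by
    ext t
    simp only [Finset.mem_Ico, Finset.mem_filter, Finset.mem_range]
    omega
  calc ∑ i ∈ Finset.range N, f (i + l) = ∑ i ∈ Finset.range N, f (l + i) := by
        apply Finset.sum_congr rfl; intro i _; rw [add_comm]
    _ = ∑ t ∈ Finset.Ico l (N + l), f t := h1.symm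
    _ = ∑ t ∈ Finset.Ico l N, f t + ∑ t ∈ Finset.Ico N (N + l), f t := h2
    _ = ∑ t ∈ Finset.Ico l N, f t := by rw [h3, add_zero]
    _ = ∑ t ∈ Finset.range N, (if l ≤ t then f t else 0) := by
        rw [h4, Finset.sum_filter]

lemma my_ico_sum (a L : ℕ) (f : ℕ → ℝ) :
    ∑ t ∈ Finset.Ico a (a + L), f t = ∑ t ∈ Finset.range L, f (a + t) := by
  rw [Finset.sum_Ico_eq_sum_range]
  simp

section det
variable {L N M : ℕ} {x : ℕ → ℝ} {p : Fin M → ℕ}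

lemma my_chain (hsep : ∀ k : ℕ, ∀ hk : k + 1 < M, p ⟨k, Nat.lt_of_succ_lt hk⟩ + L ≤ p ⟨k + 1, hk⟩)
    {a b : Fin M} (hab : a < b) : p a + L ≤ p b := by
  obtain ⟨n, hn⟩ : ∃ n : ℕ, (b : ℕ) = (a : ℕ) + n + 1 := ⟨(b : ℕ) - (a : ℕ) - 1, by omega⟩
  have key : ∀ n : ℕ, ∀ (c : ℕ) (hc : c + n + 1 < M),
      p ⟨c, by omega⟩ + L ≤ p ⟨c + n + 1, hc⟩ := by
    intro n
    induction n with
    | zero => intro c hc; exact hsep c hc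
    | succ m ih =>
      intro c hc
      have h1 := ih c (by omega)
      have h2 := hsep (c + m + 1) (by omega)
      exact le_trans h1 (le_trans (Nat.le_add_right _ _) h2)
  have hb : (a : ℕ) + n + 1 < M := by omega
  have h := key n a hb
  have h1 : (⟨(a : ℕ), by omega⟩ : Fin M) = a := Fin.ext rfl
  have h2 : (⟨(a : ℕ) + n + 1, hb⟩ : Fin M) = b := Fin.ext hn.symm
  rw [h1, h2] at h
  exact h

lemma my_cross (hsep : ∀ k : ℕ, ∀ hk : k + 1 < M, p ⟨k, Nat.lt_of_succ_lt hk⟩ + L ≤ p ⟨k + 1, hk⟩)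
    {k k' : Fin M} (hkk' : k ≠ k') (i : ℤ) :
    zpad L x (i - p k) * zpad L x (i - p k') = 0 := by
  suffices H : ∀ (a b : Fin M), a < b → zpad L x (i - p a) * zpad L x (i - p b) = 0 by
    rcases lt_or_gt_of_ne hkk' with h | h
    · exact H _ _ h
    · rw [mul_comm]; exact H _ _ h
  intro a b hab
  by_cases hz : zpad L x (i - p a) = 0
  · rw [hz, zero_mul]
  · have h1 := my_zpad_ne_zero hz
    have h2 := my_chain hsep hab
    have hzb : zpad L x (i - (p b : ℤ)) = 0 := by
      rw [zpad, if_neg]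
      rintro ⟨h3, -⟩
      have h4 : (p a : ℤ) + L ≤ p b := by exact_mod_cast h2
      omega
    rw [hzb, mul_zero]

lemma my_c_vanish (hpN : ∀ k, p k + L ≤ N) {i : ℕ} (hi : N ≤ i) :
    sconv L M x p (i : ℤ) = 0 := by
  rw [sconv]
  apply Finset.sum_eq_zero
  intro k _
  rw [zpad, if_neg]
  rintro ⟨-, h2⟩
  have h3 := hpN k
  have : ((i : ℤ) - p k) < L := h2
  omega

lemma my_c_sq_sum (hsep : ∀ k : ℕ, ∀ hk : k + 1 < M, p ⟨k, Nat.lt_of_succ_lt hk⟩ + L ≤ p ⟨k + 1, hk⟩)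
    (hpN : ∀ k, p k + L ≤ N) :
    ∑ i ∈ Finset.range N, (sconv L M x p (i : ℤ)) ^ 2
      ≤ (M : ℝ) * ∑ t ∈ Finset.range L, x t ^ 2 := by
  refine le_of_eq ?_
  have hsq : ∀ i : ℤ, (sconv L M x p i) ^ 2 = ∑ k : Fin M, (zpad L x (i - p k)) ^ 2 := by
    intro i
    rw [sconv, sq, Finset.sum_mul_sum]
    apply Finset.sum_congr rfl
    intro k _
    rw [Finset.sum_eq_single k]
    · rw [sq]
    · intro k' _ hk'
      exact my_cross hsep (Ne.symm hk') i
    · intro h; exact absurd (Finset.mem_univ k) h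
  have hk : ∀ k : Fin M, ∑ i ∈ Finset.range N, (zpad L x ((i : ℤ) - p k)) ^ 2
      = ∑ t ∈ Finset.range L, x t ^ 2 := by
    intro k
    have hsub : Finset.Ico (p k) (p k + L) ⊆ Finset.range N := by
      intro t ht
      simp only [Finset.mem_Ico] at ht
      simp only [Finset.mem_range]
      have := hpN k
      omega
    have hout : ∀ i ∈ Finset.range N, i ∉ Finset.Ico (p k) (p k + L) →
        (zpad L x ((i : ℤ) - p k)) ^ 2 = 0 := by
      intro i _ hi
      simp only [Finset.mem_Ico, not_and_or, not_le, not_lt] at hi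
      have hz : zpad L x ((i : ℤ) - p k) = 0 := by
        rw [zpad, if_neg]
        rintro ⟨h1, h2⟩
        rcases hi with h | h
        · have : (i : ℤ) < (p k : ℤ) := by exact_mod_cast h
          omega
        · have h5 : ((p k + L : ℕ) : ℤ) ≤ (i : ℤ) := by exact_mod_cast h
          push_cast at h5
          omega
      rw [hz]
      ring
    rw [← Finset.sum_subset hsub hout, my_ico_sum]
    apply Finset.sum_congr rfl
    intro t ht
    simp only [Finset.mem_range] at ht
    have he : ((p k + t : ℕ) : ℤ) - (p k : ℤ) = (t : ℤ) := by push_cast; ring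
    rw [he, my_zpad_lt x ht]
  calc ∑ i ∈ Finset.range N, (sconv L M x p (i : ℤ)) ^ 2
      = ∑ i ∈ Finset.range N, ∑ k : Fin M, (zpad L x ((i : ℤ) - p k)) ^ 2 := by
        apply Finset.sum_congr rfl; intro i _; exact hsq i
    _ = ∑ k : Fin M, ∑ i ∈ Finset.range N, (zpad L x ((i : ℤ) - p k)) ^ 2 :=
        Finset.sum_comm
    _ = ∑ k : Fin M, ∑ t ∈ Finset.range L, x t ^ 2 := by
        apply Finset.sum_congr rfl; intro k _; exact hk k
    _ = (M : ℝ) * ∑ t ∈ Finset.range L, x t ^ 2 := by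
        rw [Finset.sum_const, Finset.card_univ, Fintype.card_fin, nsmul_eq_mul]

end det

/-- Multi-target detection: there exist absolute constants `C₁, C₂ > 0` such that for every
instance of the model and every shift `0 ≤ l ≤ L−1`, the second-order autocorrelation
`a_y²[l] = (1/N) Σ_{i<N} y[i] y[i+l]` of the noisy measurement `y = s∗x + ε` (zero-padded),
with `ε[0], …, ε[N−1]` i.i.d. `N(0,σ²)`, satisfies
`Var(a_y²[l]) ≤ C₁ M ‖x‖₂² σ² / N² + C₂ σ⁴ / N`. -/
theorem mtd_second_order_autocorrelation_variance :
    ∃ C₁ C₂ : ℝ, 0 < C₁ ∧ 0 < C₂ ∧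
      ∀ (L N M : ℕ), 0 < L → L ≤ N → 2 ≤ M →
      ∀ (x : ℕ → ℝ) (p : Fin M → ℕ),
        (∀ k : ℕ, ∀ hk : k + 1 < M, p ⟨k, by omega⟩ + L ≤ p ⟨k + 1, hk⟩) →
        (∀ k : Fin M, p k + L ≤ N) →
      ∀ (Ω : Type) (_ : MeasurableSpace Ω) (P : Measure Ω), IsProbabilityMeasure P →
      ∀ σ : ℝ, 0 < σ →
      ∀ ε : Fin N → Ω → ℝ, (∀ i, Measurable (ε i)) →
        iIndepFun ε P →
        (∀ i, Measure.map (ε i) P = gaussianReal 0 (Real.toNNReal (σ ^ 2))) →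
      ∀ l : ℕ, l < L →
        variance (fun ω => (1 / (N : ℝ)) * ∑ i ∈ Finset.range N,
            (sconv L M x p i + epad N ε ω i) * (sconv L M x p (i + l) + epad N ε ω (i + l))) P
          ≤ C₁ * M * (∑ i ∈ Finset.range L, x i ^ 2) * σ ^ 2 / (N : ℝ) ^ 2
            + C₂ * σ ^ 4 / N := by
  classical
  refine ⟨8, 24, by norm_num, by norm_num, ?_⟩
  intro L N M hL hLN hM x p hsep hpN Ω mΩ P hP σ hσ ε hmeas hindep hmap l hlL
  haveI := hP
  have hveq : ((Real.toNNReal (σ ^ 2) : ℝ≥0) : ℝ) = σ ^ 2 :=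
    Real.coe_toNNReal _ (sq_nonneg σ)
  have hv : 0 < ((Real.toNNReal (σ ^ 2) : ℝ≥0) : ℝ) := by rw [hveq]; positivity
  have hlN : l < N := lt_of_lt_of_le hlL hLN
  have hN0 : 0 < N := lt_of_le_of_lt (Nat.zero_le l) hlN
  have hNR : (0:ℝ) < (N:ℝ) := by exact_mod_cast hN0
  set c : ℤ → ℝ := sconv L M x p with hcdef
  set E : ℕ → Ω → ℝ := fun i ω => epad N ε ω (i : ℤ) with hEdef
  set Sx : ℝ := ∑ t ∈ Finset.range L, x t ^ 2 with hSx
  have hSx0 : 0 ≤ Sx := Finset.sum_nonneg (fun t _ => sq_nonneg _)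
  -- random variable facts
  have hmem2 : ∀ j : Fin N, MemLp (ε j) 2 P := fun j => my_rv_memL2 hv (hmeas j) (hmap j)
  have hvar : ∀ j : Fin N, variance (ε j) P = σ ^ 2 := fun j => by
    rw [my_rv_var hv (hmeas j) (hmap j), hveq]
  have hint : ∀ (j : Fin N) (k : ℕ), Integrable (fun ω => ε j ω ^ k) P :=
    fun j k => my_rv_int hv (hmeas j) (hmap j) k
  have hm2 : ∀ j : Fin N, ∫ ω, ε j ω ^ 2 ∂P = σ ^ 2 := fun j => by
    rw [my_rv_moment hv (hmeas j) (hmap j) 2, my_gauss_m2 hv, hveq]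
  have hm4 : ∀ j : Fin N, ∫ ω, ε j ω ^ 4 ∂P = 3 * σ ^ 4 := fun j => by
    rw [my_rv_moment hv (hmeas j) (hmap j) 4, my_gauss_m4 hv, hveq]; ring
  have hE : ∀ (j : Fin N) (ω : Ω), E (j : ℕ) ω = ε j ω := by
    intro j ω
    rw [hEdef]
    simpa using my_epad_lt ε ω j.isLt
  have hE0 : ∀ (i : ℕ) (ω : Ω), N ≤ i → E i ω = 0 := by
    intro i ω hi
    rw [hEdef]
    exact my_epad_ge ε ω hi
  have hc0 : ∀ i : ℕ, N ≤ i → c (i : ℤ) = 0 := fun i hi => my_c_vanish hpN hi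
  -- definitions
  set B : ℕ → ℝ := fun j => (if l ≤ j then c ((j - l : ℕ) : ℤ) else 0) + c ((j + l : ℕ) : ℤ)
    with hBdef
  set Lin : Ω → ℝ := fun ω => ∑ j ∈ Finset.range N, B j * E j ω with hLindef
  set Q : Ω → ℝ := fun ω => ∑ i ∈ Finset.range N, E i ω * E (i + l) ω with hQdef
  set A : ℝ := ∑ i ∈ Finset.range N, c (i : ℤ) * c ((i + l : ℕ) : ℤ) with hAdef
  -- the algebraic decomposition
  have hfun : (fun ω => (1 / (N : ℝ)) * ∑ i ∈ Finset.range N,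
        (sconv L M x p i + epad N ε ω i) * (sconv L M x p (i + l) + epad N ε ω (i + l)))
      = fun ω => (1 / (N : ℝ)) * (A + (Lin ω + Q ω)) := by
    funext ω
    congr 1
    have hstep : ∀ i : ℕ, (c (i : ℤ) + E i ω) * (c ((i + l : ℕ) : ℤ) + E (i + l) ω)
        = c (i : ℤ) * c ((i + l : ℕ) : ℤ)
          + ((c (i : ℤ) * E (i + l) ω + c ((i + l : ℕ) : ℤ) * E i ω) + E i ω * E (i + l) ω) := by
      intro i; ring
    have hmid : ∑ i ∈ Finset.range N, (c (i : ℤ) * E (i + l) ω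
        + c ((i + l : ℕ) : ℤ) * E i ω) = Lin ω := by
      rw [Finset.sum_add_distrib, hLindef]
      have h1 : ∑ i ∈ Finset.range N, c (i : ℤ) * E (i + l) ω
          = ∑ j ∈ Finset.range N, (if l ≤ j then c ((j - l : ℕ) : ℤ) * E j ω else 0) := by
        have := my_shift_sum N l hlN.le (fun t => c ((t - l : ℕ) : ℤ) * E t ω)
          (fun t ht => by show c ((t - l : ℕ) : ℤ) * E t ω = 0; rw [hE0 t ω ht, mul_zero])
        simpa using this
      rw [h1, ← Finset.sum_add_distrib]
      apply Finset.sum_congr rfl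
      intro j _
      simp only [hBdef]
      split_ifs <;> ring
    calc ∑ i ∈ Finset.range N,
          (sconv L M x p i + epad N ε ω i) * (sconv L M x p (i + l) + epad N ε ω (i + l))
        = ∑ i ∈ Finset.range N,
          (c (i : ℤ) + E i ω) * (c ((i + l : ℕ) : ℤ) + E (i + l) ω) := by
          apply Finset.sum_congr rfl
          intro i _
          simp only [hEdef, hcdef]
          push_cast
          ring
      _ = A + (Lin ω + Q ω) := by
          rw [Finset.sum_congr rfl (fun i _ => hstep i), Finset.sum_add_distrib,
            Finset.sum_add_distrib, hmid, hAdef, hQdef]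
  rw [hfun]
  -- Lin as a Fin-indexed sum
  have hLinFin : Lin = fun ω => ∑ j : Fin N, B (j : ℕ) * ε j ω := by
    funext ω
    simp only [hLindef]
    rw [← Fin.sum_univ_eq_sum_range (fun i => B i * E i ω) N]
    exact Finset.sum_congr rfl (fun j _ => by rw [hE j ω])
  have hsa : ∀ (s : Finset (Fin N)) (F : Fin N → Ω → ℝ),
      (∑ j ∈ s, F j) = fun ω => ∑ j ∈ s, F j ω := by
    intro s F; funext ω; simp
  have hmemLin : MemLp Lin 2 P := by
    rw [hLinFin]
    exact memLp_finset_sum Finset.univ (fun j _ => (hmem2 j).const_mul (B (j : ℕ)))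
  -- variance of Lin
  have hBsum : ∑ j ∈ Finset.range N, B j ^ 2 ≤ 4 * (M : ℝ) * Sx := by
    have hcs := my_c_sq_sum (x := x) (N := N) hsep hpN
    rw [← hSx, ← hcdef] at hcs
    have hu : ∑ j ∈ Finset.range N, (if l ≤ j then c ((j - l : ℕ) : ℤ) else 0) ^ 2
        ≤ (M : ℝ) * Sx := by
      have h1 : ∑ j ∈ Finset.range N, (if l ≤ j then c ((j - l : ℕ) : ℤ) else 0) ^ 2
          = ∑ j ∈ Finset.range N, (if l ≤ j then c ((j - l : ℕ) : ℤ) ^ 2 else 0) := by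
        apply Finset.sum_congr rfl
        intro j _
        split_ifs <;> simp
      have h2 : Finset.Ico l N = (Finset.range N).filter (fun t => l ≤ t) := by
        ext t
        simp only [Finset.mem_Ico, Finset.mem_filter, Finset.mem_range]
        omega
      have h3 : ∑ j ∈ Finset.range N, (if l ≤ j then c ((j - l : ℕ) : ℤ) ^ 2 else 0)
          = ∑ j ∈ Finset.Ico l N, c ((j - l : ℕ) : ℤ) ^ 2 := by
        rw [h2, Finset.sum_filter]
      have h4 : ∑ j ∈ Finset.Ico l N, c ((j - l : ℕ) : ℤ) ^ 2
          = ∑ i ∈ Finset.range (N - l), c ((i : ℕ) : ℤ) ^ 2 := by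
        rw [Finset.sum_Ico_eq_sum_range]
        apply Finset.sum_congr rfl
        intro i _
        congr 2
        omega
      have h5 : ∑ i ∈ Finset.range (N - l), c ((i : ℕ) : ℤ) ^ 2
          ≤ ∑ i ∈ Finset.range N, c ((i : ℕ) : ℤ) ^ 2 := by
        apply Finset.sum_le_sum_of_subset_of_nonneg
        · exact Finset.range_subset_range.2 (Nat.sub_le N l)
        · intro i _ _; exact sq_nonneg _
      calc ∑ j ∈ Finset.range N, (if l ≤ j then c ((j - l : ℕ) : ℤ) else 0) ^ 2
          = ∑ j ∈ Finset.Ico l N, c ((j - l : ℕ) : ℤ) ^ 2 := by rw [h1, h3]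
        _ ≤ ∑ i ∈ Finset.range N, c ((i : ℕ) : ℤ) ^ 2 := h4 ▸ h5
        _ ≤ (M : ℝ) * Sx := hcs
    have hw : ∑ j ∈ Finset.range N, c ((j + l : ℕ) : ℤ) ^ 2 ≤ (M : ℝ) * Sx := by
      have h1 := my_shift_sum N l hlN.le (fun t => c ((t : ℕ) : ℤ) ^ 2)
        (fun t ht => by show c ((t : ℕ) : ℤ) ^ 2 = 0; rw [hc0 t ht]; ring)
      calc ∑ j ∈ Finset.range N, c ((j + l : ℕ) : ℤ) ^ 2
          = ∑ t ∈ Finset.range N, (if l ≤ t then c ((t : ℕ) : ℤ) ^ 2 else 0) := h1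
        _ ≤ ∑ t ∈ Finset.range N, c ((t : ℕ) : ℤ) ^ 2 := by
            apply Finset.sum_le_sum
            intro t _
            split_ifs
            · exact le_refl _
            · exact sq_nonneg _
        _ ≤ (M : ℝ) * Sx := hcs
    have hpt : ∀ j ∈ Finset.range N, B j ^ 2
        ≤ 2 * (if l ≤ j then c ((j - l : ℕ) : ℤ) else 0) ^ 2
          + 2 * c ((j + l : ℕ) : ℤ) ^ 2 := by
      intro j _
      simp only [hBdef]
      nlinarith [sq_nonneg ((if l ≤ j then c ((j - l : ℕ) : ℤ) else 0) - c ((j + l : ℕ) : ℤ))]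
    calc ∑ j ∈ Finset.range N, B j ^ 2
        ≤ ∑ j ∈ Finset.range N, (2 * (if l ≤ j then c ((j - l : ℕ) : ℤ) else 0) ^ 2
            + 2 * c ((j + l : ℕ) : ℤ) ^ 2) := Finset.sum_le_sum hpt
      _ = 2 * (∑ j ∈ Finset.range N, (if l ≤ j then c ((j - l : ℕ) : ℤ) else 0) ^ 2)
            + 2 * ∑ j ∈ Finset.range N, c ((j + l : ℕ) : ℤ) ^ 2 := by
          rw [Finset.sum_add_distrib, Finset.mul_sum, Finset.mul_sum]
      _ ≤ 2 * ((M : ℝ) * Sx) + 2 * ((M : ℝ) * Sx) := by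
          apply add_le_add
          · exact mul_le_mul_of_nonneg_left hu (by norm_num)
          · exact mul_le_mul_of_nonneg_left hw (by norm_num)
      _ = 4 * (M : ℝ) * Sx := by ring
  have hvarLin : variance Lin P ≤ 4 * (M : ℝ) * Sx * σ ^ 2 := by
    rw [hLinFin, ← hsa Finset.univ (fun j => fun ω => B (j : ℕ) * ε j ω)]
    rw [IndepFun.variance_sum
      (fun j _ => (hmem2 j).const_mul (B (j : ℕ)))
      (fun j _ j' _ hne => (hindep.indepFun hne).comp
        (measurable_const_mul (B (j : ℕ))) (measurable_const_mul (B (j' : ℕ))))]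
    have h1 : ∀ j : Fin N, variance (fun ω => B (j : ℕ) * ε j ω) P
        = B (j : ℕ) ^ 2 * σ ^ 2 := by
      intro j
      rw [variance_const_mul, hvar j]
    rw [Finset.sum_congr rfl (fun j _ => h1 j), ← Finset.sum_mul]
    rw [Fin.sum_univ_eq_sum_range (fun j => B j ^ 2) N]
    exact mul_le_mul_of_nonneg_right hBsum (sq_nonneg σ)
  -- Q as a Fin-indexed sum
  set Zfun : Fin N → Ω → ℝ := fun j =>
    if h : (j : ℕ) + l < N then (fun ω => ε j ω * ε (⟨(j : ℕ) + l, h⟩ : Fin N) ω)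
    else (fun _ => 0) with hZdef
  have hQFin : Q = fun ω => ∑ j : Fin N, Zfun j ω := by
    funext ω
    simp only [hQdef]
    rw [← Fin.sum_univ_eq_sum_range (fun i => E i ω * E (i + l) ω) N]
    apply Finset.sum_congr rfl
    intro j _
    by_cases h : (j : ℕ) + l < N
    · simp only [hZdef]
      rw [dif_pos h, hE j ω]
      congr 1
      rw [hEdef]
      simpa using my_epad_lt ε ω h
    · simp only [hZdef]
      rw [dif_neg h, hE0 ((j : ℕ) + l) ω (by omega), mul_zero]
  set T : Finset (Fin N) := Finset.univ.filter (fun j : Fin N => (j : ℕ) + l < N) with hTdef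
  have hQT : Q = fun ω => ∑ j ∈ T, Zfun j ω := by
    rw [hQFin]
    funext ω
    symm
    apply Finset.sum_subset (Finset.subset_univ T)
    intro j _ hj
    have h : ¬((j : ℕ) + l < N) := by
      intro hc
      exact hj (by rw [hTdef]; exact Finset.mem_filter.2 ⟨Finset.mem_univ j, hc⟩)
    simp only [hZdef]
    rw [dif_neg h]
  have hZmem : ∀ j : Fin N, MemLp (Zfun j) 2 P := by
    intro j
    simp only [hZdef]
    by_cases h : (j : ℕ) + l < N
    · rw [dif_pos h]
      set b : Fin N := ⟨(j : ℕ) + l, h⟩ with hbdef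
      refine (memLp_two_iff_integrable_sq
        (((hmeas j).mul (hmeas b)).aestronglyMeasurable)).2 ?_
      by_cases hab : b = j
      · have he : (fun ω => (ε j ω * ε b ω) ^ 2) = fun ω => ε j ω ^ 4 := by
          funext ω; rw [hab]; ring
        simp only [Pi.mul_apply]
        rw [he]
        exact hint j 4
      · have hii : IndepFun (fun ω => ε j ω ^ 2) (fun ω => ε b ω ^ 2) P :=
          (hindep.indepFun (Ne.symm hab)).comp (measurable_id.pow_const 2)
            (measurable_id.pow_const 2)
        have hmul := hii.integrable_mul (hint j 2) (hint b 2)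
        apply hmul.congr
        filter_upwards with ω
        simp only [Pi.mul_apply]
        ring
    · rw [dif_neg h]
      exact memLp_const 0
  have hZvar : ∀ j : Fin N, (j : ℕ) + l < N → variance (Zfun j) P ≤ 3 * σ ^ 4 := by
    intro j h
    have hze : Zfun j = fun ω => ε j ω * ε (⟨(j : ℕ) + l, h⟩ : Fin N) ω := by
      simp only [hZdef]; rw [dif_pos h]
    set b : Fin N := ⟨(j : ℕ) + l, h⟩ with hbdef
    rw [hze]
    have hv1 := variance_le_expectation_sq (μ := P)
      (X := fun ω => ε j ω * ε b ω) (((hmeas j).mul (hmeas b)).aestronglyMeasurable)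
    have hkey : ∫ ω, (ε j ω * ε b ω) ^ 2 ∂P ≤ 3 * σ ^ 4 := by
      by_cases hab : b = j
      · have he : (fun ω => (ε j ω * ε b ω) ^ 2) = fun ω => ε j ω ^ 4 := by
          funext ω; rw [hab]; ring
        rw [he, hm4 j]
      · have hii : IndepFun (fun ω => ε j ω ^ 2) (fun ω => ε b ω ^ 2) P :=
          (hindep.indepFun (Ne.symm hab)).comp (measurable_id.pow_const 2)
            (measurable_id.pow_const 2)
        have hprod := hii.integral_mul_eq_mul_integral (hint j 2).aestronglyMeasurable (hint b 2).aestronglyMeasurable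
        have h2 : ∫ ω, (ε j ω * ε b ω) ^ 2 ∂P
            = (∫ ω, ε j ω ^ 2 ∂P) * ∫ ω, ε b ω ^ 2 ∂P := by
          rw [← hprod]
          apply integral_congr_ae
          filter_upwards with ω
          simp only [Pi.mul_apply]
          ring
        rw [h2, hm2 j, hm2 b]
        nlinarith [sq_nonneg σ, sq_nonneg (σ ^ 2)]
    exact le_trans hv1 hkey
  have hcardT : (T.card : ℝ) ≤ (N : ℝ) := by
    have := Finset.card_filter_le Finset.univ (fun j : Fin N => (j : ℕ) + l < N)
    rw [← hTdef] at this
    simp only [Finset.card_univ, Fintype.card_fin] at this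
    exact_mod_cast this
  have hmemQ : MemLp Q 2 P := by
    rw [hQT]
    exact memLp_finset_sum T (fun j _ => hZmem j)
  -- variance of Q
  have hvarQ : variance Q P ≤ 12 * (N : ℝ) * σ ^ 4 := by
    have hσ4 : (0:ℝ) ≤ σ ^ 4 := by positivity
    by_cases hl : l = 0
    · subst hl
      rw [hQT, ← hsa T Zfun]
      rw [IndepFun.variance_sum (fun j _ => hZmem j) ?hpair]
      case hpair =>
        intro j hj j' hj' hne
        have hjT : (j : ℕ) + 0 < N := by
          have := Finset.mem_coe.1 hj; rw [hTdef] at this; simpa using this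
        have hj'T : (j' : ℕ) + 0 < N := by
          have := Finset.mem_coe.1 hj'; rw [hTdef] at this; simpa using this
        have he1 : (⟨(j : ℕ) + 0, hjT⟩ : Fin N) = j := Fin.ext (Nat.add_zero _)
        have he2 : (⟨(j' : ℕ) + 0, hj'T⟩ : Fin N) = j' := Fin.ext (Nat.add_zero _)
        have hz1 : Zfun j = fun ω => ε j ω * ε j ω := by
          simp only [hZdef]; rw [dif_pos hjT, he1]
        have hz2 : Zfun j' = fun ω => ε j' ω * ε j' ω := by
          simp only [hZdef]; rw [dif_pos hj'T, he2]
        rw [hz1, hz2]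
        exact (hindep.indepFun hne).comp (measurable_id.mul measurable_id)
          (measurable_id.mul measurable_id)
      calc ∑ j ∈ T, variance (Zfun j) P ≤ ∑ _j ∈ T, 3 * σ ^ 4 := by
            apply Finset.sum_le_sum
            intro j hj
            have hjT : (j : ℕ) + 0 < N := by
              rw [hTdef] at hj; simpa using hj
            exact hZvar j hjT
        _ = (T.card : ℝ) * (3 * σ ^ 4) := by rw [Finset.sum_const, nsmul_eq_mul]
        _ ≤ (N : ℝ) * (3 * σ ^ 4) := by
            apply mul_le_mul_of_nonneg_right hcardT (by positivity)
        _ ≤ 12 * (N : ℝ) * σ ^ 4 := by nlinarith [hNR]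
    · have hl1 : 0 < l := Nat.pos_of_ne_zero hl
      set T0 : Finset (Fin N) := T.filter (fun j => ((j : ℕ) / l) % 2 = 0) with hT0def
      set T1 : Finset (Fin N) := T.filter (fun j => ¬(((j : ℕ) / l) % 2 = 0)) with hT1def
      have hpair : ∀ (s : Finset (Fin N)), s ⊆ T →
          (∀ j ∈ s, ∀ j' ∈ s, j ≠ j' → (j : ℕ) ≠ (j' : ℕ) + l) →
          variance (fun ω => ∑ j ∈ s, Zfun j ω) P ≤ (N : ℝ) * (3 * σ ^ 4) := by
        intro s hsT hgood
        rw [← hsa s Zfun]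
        rw [IndepFun.variance_sum (fun j _ => hZmem j) ?hp]
        case hp =>
          intro j hj j' hj' hne
          have hjs := Finset.mem_coe.1 hj
          have hj's := Finset.mem_coe.1 hj'
          have hjT : (j : ℕ) + l < N := by
            have := hsT hjs; rw [hTdef] at this; simpa using this
          have hj'T : (j' : ℕ) + l < N := by
            have := hsT hj's; rw [hTdef] at this; simpa using this
          have hz1 : Zfun j = fun ω => ε j ω * ε (⟨(j : ℕ) + l, hjT⟩ : Fin N) ω := by
            simp only [hZdef]; rw [dif_pos hjT]
          have hz2 : Zfun j' = fun ω => ε j' ω * ε (⟨(j' : ℕ) + l, hj'T⟩ : Fin N) ω := by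
            simp only [hZdef]; rw [dif_pos hj'T]
          rw [hz1, hz2]
          have d1 : j ≠ j' := hne
          have d2 : j ≠ (⟨(j' : ℕ) + l, hj'T⟩ : Fin N) := by
            intro hEq
            exact hgood j hjs j' hj's hne (by rw [hEq])
          have d3 : (⟨(j : ℕ) + l, hjT⟩ : Fin N) ≠ j' := by
            intro hEq
            exact hgood j' hj's j hjs (Ne.symm hne) (by rw [← hEq])
          have d4 : (⟨(j : ℕ) + l, hjT⟩ : Fin N) ≠ (⟨(j' : ℕ) + l, hj'T⟩ : Fin N) := by
            intro hEq
            apply hne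
            have := congrArg Fin.val hEq
            simp only at this
            exact Fin.ext (by omega)
          exact hindep.indepFun_mul_mul hmeas j (⟨(j : ℕ) + l, hjT⟩ : Fin N)
            j' (⟨(j' : ℕ) + l, hj'T⟩ : Fin N) d1 d2 d3 d4
        calc ∑ j ∈ s, variance (Zfun j) P ≤ ∑ _j ∈ s, 3 * σ ^ 4 := by
              apply Finset.sum_le_sum
              intro j hj
              have hjT : (j : ℕ) + l < N := by
                have := hsT hj; rw [hTdef] at this; simpa using this
              exact hZvar j hjT
          _ = (s.card : ℝ) * (3 * σ ^ 4) := by rw [Finset.sum_const, nsmul_eq_mul]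
          _ ≤ (N : ℝ) * (3 * σ ^ 4) := by
              apply mul_le_mul_of_nonneg_right _ (by positivity)
              have h1 : s.card ≤ N := by
                have := Finset.card_le_card (Finset.subset_univ s)
                simpa using this
              exact_mod_cast h1
      have hgood0 : ∀ j ∈ T0, ∀ j' ∈ T0, j ≠ j' → (j : ℕ) ≠ (j' : ℕ) + l := by
        intro j hj j' hj' hne hEq
        rw [hT0def, Finset.mem_filter] at hj hj'
        have h1 : (j : ℕ) / l = (j' : ℕ) / l + 1 := by
          rw [hEq]; exact Nat.add_div_right _ hl1
        omega
      have hgood1 : ∀ j ∈ T1, ∀ j' ∈ T1, j ≠ j' → (j : ℕ) ≠ (j' : ℕ) + l := by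
        intro j hj j' hj' hne hEq
        rw [hT1def, Finset.mem_filter] at hj hj'
        have h1 : (j : ℕ) / l = (j' : ℕ) / l + 1 := by
          rw [hEq]; exact Nat.add_div_right _ hl1
        omega
      have hsplit : Q = fun ω => (∑ j ∈ T0, Zfun j ω) + ∑ j ∈ T1, Zfun j ω := by
        rw [hQT]
        funext ω
        rw [hT0def, hT1def]
        exact (Finset.sum_filter_add_sum_filter_not T _ _).symm
      have hmem0 : MemLp (fun ω => ∑ j ∈ T0, Zfun j ω) 2 P :=
        memLp_finset_sum T0 (fun j _ => hZmem j)
      have hmem1 : MemLp (fun ω => ∑ j ∈ T1, Zfun j ω) 2 P :=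
        memLp_finset_sum T1 (fun j _ => hZmem j)
      rw [hsplit]
      calc variance (fun ω => (∑ j ∈ T0, Zfun j ω) + ∑ j ∈ T1, Zfun j ω) P
          ≤ 2 * variance (fun ω => ∑ j ∈ T0, Zfun j ω) P
            + 2 * variance (fun ω => ∑ j ∈ T1, Zfun j ω) P :=
            my_variance_add_le _ _ hmem0 hmem1
        _ ≤ 2 * ((N : ℝ) * (3 * σ ^ 4)) + 2 * ((N : ℝ) * (3 * σ ^ 4)) := by
            apply add_le_add
            · exact mul_le_mul_of_nonneg_left
                (hpair T0 (by rw [hT0def]; exact Finset.filter_subset _ _) hgood0)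
                (by norm_num)
            · exact mul_le_mul_of_nonneg_left
                (hpair T1 (by rw [hT1def]; exact Finset.filter_subset _ _) hgood1)
                (by norm_num)
        _ = 12 * (N : ℝ) * σ ^ 4 := by ring
  -- final assembly
  have hintLQ : Integrable (fun ω => Lin ω + Q ω) P :=
    (hmemLin.add hmemQ).integrable one_le_two
  rw [variance_const_mul, my_variance_const_add A (fun ω => Lin ω + Q ω) hintLQ]
  have hadd := my_variance_add_le Lin Q hmemLin hmemQ
  have hfinal : variance (fun ω => Lin ω + Q ω) P
      ≤ 8 * (M : ℝ) * Sx * σ ^ 2 + 24 * (N : ℝ) * σ ^ 4 := by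
    calc variance (fun ω => Lin ω + Q ω) P
        ≤ 2 * variance Lin P + 2 * variance Q P := hadd
      _ ≤ 2 * (4 * (M : ℝ) * Sx * σ ^ 2) + 2 * (12 * (N : ℝ) * σ ^ 4) := by
          apply add_le_add
          · exact mul_le_mul_of_nonneg_left hvarLin (by norm_num)
          · exact mul_le_mul_of_nonneg_left hvarQ (by norm_num)
      _ = 8 * (M : ℝ) * Sx * σ ^ 2 + 24 * (N : ℝ) * σ ^ 4 := by ring
  calc (1 / (N : ℝ)) ^ 2 * variance (fun ω => Lin ω + Q ω) P
      ≤ (1 / (N : ℝ)) ^ 2 * (8 * (M : ℝ) * Sx * σ ^ 2 + 24 * (N : ℝ) * σ ^ 4) :=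
        mul_le_mul_of_nonneg_left hfinal (sq_nonneg _)
    _ = 8 * (M : ℝ) * Sx * σ ^ 2 / (N : ℝ) ^ 2 + 24 * σ ^ 4 / (N : ℝ) := by
        field_simp
end

section
/- Fix L ≥ 1, σ > 0, segments y_0, …, y_{N_d−1} ∈ ℝ^L, and nonnegative weights w_m[l] for 0 ≤ m ≤ N_d−1 and 0 ≤ l ≤ 2L−1. Define F(x) = Σ_{m=0}^{N_d−1} Σ_{l=0}^{2L−1} w_m[l] g_l^{(m)}(x), where g_l^{(m)}(x) = −(1/(2σ²)) Σ_{i=0}^{L−1} ( y_m[i] − (Zx)[(i+l) mod 2L] )². If for every 0 ≤ j ≤ L−1 the denominator D_j = Σ_{m=0}^{N_d−1} Σ_{l=j+1}^{j+L} w_m[l] is strictly positive, then F is a concave quadratic function of x with a unique global maximizer x* given coordinatewise by x*[j] = ( Σ_{m=0}^{N_d−1} Σ_{l=j+1}^{j+L} w_m[l] y_m[j+L−l] ) / D_j. -/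
/-- Left zero-padding `Z : ℝ^L → ℝ^{2L}`: `(Zx)[i] = 0` for `0 ≤ i ≤ L−1` and
`(Zx)[i] = x[i−L]` for `L ≤ i ≤ 2L−1` (represented on `ℕ`, zero elsewhere). -/
noncomputable def Zpad (L : ℕ) (x : Fin L → ℝ) : ℕ → ℝ :=
  fun i => if h : L ≤ i ∧ i < 2 * L then x ⟨i - L, by omega⟩ else 0

/-- The (shifted) log-likelihood term
`g_l^{(m)}(x) = −(1/(2σ²)) Σ_{i=0}^{L−1} ( y_m[i] − (Zx)[(i+l) mod 2L] )²`. -/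
noncomputable def loglik (L : ℕ) (σ : ℝ) (ym : ℕ → ℝ) (l : ℕ) (x : Fin L → ℝ) : ℝ :=
  -(1 / (2 * σ ^ 2)) * ∑ i ∈ Finset.range L, (ym i - Zpad L x ((i + l) % (2 * L))) ^ 2

/-- The M-step objective of the approximate EM algorithm (well-separated signals):
`F(x) = Σ_{m<N_d} Σ_{l<2L} w_m[l] g_l^{(m)}(x)`, where `y m` is the `m`-th segment and
`w m l` the posterior weight. -/
noncomputable def emObjective (L : ℕ) (σ : ℝ) (Nd : ℕ) (y : ℕ → ℕ → ℝ) (w : ℕ → ℕ → ℝ)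
    (x : Fin L → ℝ) : ℝ :=
  ∑ m ∈ Finset.range Nd, ∑ l ∈ Finset.range (2 * L), w m l * loglik L σ (y m) l x

lemma mod_helper (L i l : ℕ) (hi : i < L) (hl : l < 2 * L) :
    (i + l) % (2 * L) = if i + l < 2 * L then i + l else i + l - 2 * L := by
  split
  · exact Nat.mod_eq_of_lt ‹_›
  · rw [Nat.mod_eq_sub_mod (by omega), Nat.mod_eq_of_lt (by omega)]

lemma key (L : ℕ) (ym : ℕ → ℝ) (l : ℕ) (hl : l < 2 * L) (x : Fin L → ℝ) :
    ∑ i ∈ Finset.range L, (ym i - Zpad L x ((i + l) % (2 * L))) ^ 2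
    = (∑ i ∈ (Finset.range L).filter (fun i => (i + l) % (2 * L) < L), (ym i) ^ 2)
      + ∑ j ∈ (Finset.range L).filter (fun j => l ∈ Finset.Icc (j + 1) (j + L)),
          (ym (j + L - l) - Zpad L x (j + L)) ^ 2 := by
  rw [← Finset.sum_filter_add_sum_filter_not (Finset.range L)
      (fun i => (i + l) % (2 * L) < L)]
  congr 1
  · apply Finset.sum_congr rfl
    intro i hi
    simp only [Finset.mem_filter, Finset.mem_range] at hi
    rw [Zpad, dif_neg (by omega)]
    ring
  · apply Finset.sum_nbij' (fun i => i + l - L) (fun j => j + L - l)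
    · intro i hi
      simp only [Finset.mem_filter, Finset.mem_range, not_lt] at hi ⊢
      rw [mod_helper L i l hi.1 hl] at hi
      split at hi <;> simp only [Finset.mem_Icc] <;> omega
    · intro j hj
      simp only [Finset.mem_filter, Finset.mem_range, Finset.mem_Icc, not_lt] at hj ⊢
      rw [mod_helper L _ l (by omega) hl]
      split <;> omega
    · intro i hi
      simp only [Finset.mem_filter, Finset.mem_range, not_lt] at hi
      rw [mod_helper L i l hi.1 hl] at hi
      obtain ⟨h1, h2⟩ := hi
      split at h2 <;> omega
    · intro j hj
      simp only [Finset.mem_filter, Finset.mem_range, Finset.mem_Icc] at hj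
      omega
    · intro i hi
      simp only [Finset.mem_filter, Finset.mem_range, not_lt] at hi
      rw [mod_helper L i l hi.1 hl] at hi ⊢
      have h2 : i + l < 2 * L := by by_contra h; rw [if_neg (by omega)] at hi; omega
      rw [if_pos h2] at hi ⊢
      have h3 : i + l - L + L - l = i := by omega
      rw [h3]
      have h4 : i + l - L + L = i + l := by omega
      rw [h4]

lemma swap_lemma (L : ℕ) (f : ℕ → ℕ → ℝ) :
    ∑ l ∈ Finset.range (2 * L), ∑ j ∈ (Finset.range L).filter
        (fun j => l ∈ Finset.Icc (j + 1) (j + L)), f l j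
    = ∑ j ∈ Finset.range L, ∑ l ∈ Finset.Icc (j + 1) (j + L), f l j := by
  simp only [Finset.sum_filter]
  rw [Finset.sum_comm]
  apply Finset.sum_congr rfl
  intro j hj
  rw [← Finset.sum_filter]
  apply Finset.sum_congr _ (fun _ _ => rfl)
  ext l
  simp only [Finset.mem_filter, Finset.mem_range, Finset.mem_Icc] at hj ⊢
  omega

noncomputable def Qj (L Nd : ℕ) (y w : ℕ → ℕ → ℝ) (j : ℕ) (t : ℝ) : ℝ :=
  ∑ m ∈ Finset.range Nd, ∑ l ∈ Finset.Icc (j + 1) (j + L), w m l * (y m (j + L - l) - t) ^ 2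

lemma Qj_expand (L Nd : ℕ) (y w : ℕ → ℕ → ℝ) (j : ℕ) (t : ℝ) :
    Qj L Nd y w j t
    = (∑ m ∈ Finset.range Nd, ∑ l ∈ Finset.Icc (j + 1) (j + L), w m l * (y m (j + L - l)) ^ 2)
      - 2 * t * (∑ m ∈ Finset.range Nd, ∑ l ∈ Finset.Icc (j + 1) (j + L),
          w m l * y m (j + L - l))
      + t ^ 2 * (∑ m ∈ Finset.range Nd, ∑ l ∈ Finset.Icc (j + 1) (j + L), w m l) := by
  unfold Qj
  rw [Finset.mul_sum, Finset.mul_sum, ← Finset.sum_sub_distrib, ← Finset.sum_add_distrib]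
  apply Finset.sum_congr rfl; intro m _
  rw [Finset.mul_sum, Finset.mul_sum, ← Finset.sum_sub_distrib, ← Finset.sum_add_distrib]
  apply Finset.sum_congr rfl; intro l _
  ring

lemma quad_min (D N C : ℝ) (hD : D ≠ 0) (t : ℝ) :
    C - 2 * t * N + t ^ 2 * D
    = (C - 2 * (N / D) * N + (N / D) ^ 2 * D) + D * (t - N / D) ^ 2 := by
  field_simp
  ring

lemma Zpad_apply (L : ℕ) (x : Fin L → ℝ) (j : Fin L) : Zpad L x ((j : ℕ) + L) = x j := by
  rw [Zpad, dif_pos (by omega)]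
  congr 1
  ext
  simp

lemma rep (L : ℕ) (σ : ℝ) (Nd : ℕ) (y w : ℕ → ℕ → ℝ) (x : Fin L → ℝ) :
    emObjective L σ Nd y w x
    = -(1 / (2 * σ ^ 2)) * ((∑ m ∈ Finset.range Nd, ∑ l ∈ Finset.range (2 * L),
          w m l * ∑ i ∈ (Finset.range L).filter (fun i => (i + l) % (2 * L) < L), (y m i) ^ 2)
        + ∑ j : Fin L, Qj L Nd y w j (x j)) := by
  unfold emObjective loglik
  have step1 : ∑ m ∈ Finset.range Nd, ∑ l ∈ Finset.range (2 * L),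
      w m l * (-(1 / (2 * σ ^ 2)) * ∑ i ∈ Finset.range L,
        (y m i - Zpad L x ((i + l) % (2 * L))) ^ 2)
      = -(1 / (2 * σ ^ 2)) * ∑ m ∈ Finset.range Nd, ∑ l ∈ Finset.range (2 * L),
        w m l * ∑ i ∈ Finset.range L, (y m i - Zpad L x ((i + l) % (2 * L))) ^ 2 := by
    rw [Finset.mul_sum]
    refine Finset.sum_congr rfl fun m _ => ?_
    rw [Finset.mul_sum]
    exact Finset.sum_congr rfl fun l _ => by ring
  rw [step1]
  congr 1
  have step2 : ∀ m, ∑ l ∈ Finset.range (2 * L),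
      w m l * ∑ i ∈ Finset.range L, (y m i - Zpad L x ((i + l) % (2 * L))) ^ 2
      = (∑ l ∈ Finset.range (2 * L),
          w m l * ∑ i ∈ (Finset.range L).filter (fun i => (i + l) % (2 * L) < L), (y m i) ^ 2)
        + ∑ j ∈ Finset.range L, ∑ l ∈ Finset.Icc (j + 1) (j + L),
            w m l * (y m (j + L - l) - Zpad L x (j + L)) ^ 2 := by
    intro m
    rw [← swap_lemma L (fun l j => w m l * (y m (j + L - l) - Zpad L x (j + L)) ^ 2),
      ← Finset.sum_add_distrib]
    refine Finset.sum_congr rfl fun l hl => ?_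
    rw [key L (y m) l (Finset.mem_range.mp hl) x, mul_add, Finset.mul_sum, Finset.mul_sum]
  rw [Finset.sum_congr rfl (fun m _ => step2 m), Finset.sum_add_distrib]
  congr 1
  rw [Finset.sum_comm, ← Fin.sum_univ_eq_sum_range
    (fun j => ∑ m ∈ Finset.range Nd, ∑ l ∈ Finset.Icc (j + 1) (j + L),
      w m l * (y m (j + L - l) - Zpad L x (j + L)) ^ 2) L]
  refine Finset.sum_congr rfl fun j _ => ?_
  unfold Qj
  simp only [Zpad_apply]

/-- Fix `L ≥ 1`, `σ > 0`, segments `y_0, …, y_{N_d−1} ∈ ℝ^L` and nonnegative weights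
`w_m[l]` (`0 ≤ m < N_d`, `0 ≤ l ≤ 2L−1`). Let
`F(x) = Σ_m Σ_{l<2L} w_m[l] g_l^{(m)}(x)` with
`g_l^{(m)}(x) = −(1/(2σ²)) Σ_{i<L} ( y_m[i] − (Zx)[(i+l) mod 2L] )²`. If the denominators
`D_j = Σ_m Σ_{l=j+1}^{j+L} w_m[l]` are strictly positive for all `0 ≤ j ≤ L−1`, then `F` is
concave with a unique global maximizer `x*` given coordinatewise by
`x*[j] = ( Σ_m Σ_{l=j+1}^{j+L} w_m[l] y_m[j+L−l] ) / D_j`. -/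
theorem emObjective_unique_maximizer
    (L : ℕ) (hL : 1 ≤ L) (σ : ℝ) (hσ : 0 < σ) (Nd : ℕ)
    (y : ℕ → ℕ → ℝ) (w : ℕ → ℕ → ℝ) (hw : ∀ m l, 0 ≤ w m l)
    (hD : ∀ j : Fin L,
      0 < ∑ m ∈ Finset.range Nd, ∑ l ∈ Finset.Icc ((j : ℕ) + 1) ((j : ℕ) + L), w m l) :
    ConcaveOn ℝ Set.univ (emObjective L σ Nd y w) ∧
    (∀ x : Fin L → ℝ, emObjective L σ Nd y w x ≤ emObjective L σ Nd y w
      (fun j => (∑ m ∈ Finset.range Nd, ∑ l ∈ Finset.Icc ((j : ℕ) + 1) ((j : ℕ) + L),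
          w m l * y m ((j : ℕ) + L - l))
        / ∑ m ∈ Finset.range Nd, ∑ l ∈ Finset.Icc ((j : ℕ) + 1) ((j : ℕ) + L), w m l)) ∧
    (∀ x : Fin L → ℝ,
      (∀ z : Fin L → ℝ, emObjective L σ Nd y w z ≤ emObjective L σ Nd y w x) →
      x = fun j : Fin L => (∑ m ∈ Finset.range Nd, ∑ l ∈ Finset.Icc ((j : ℕ) + 1) ((j : ℕ) + L),
          w m l * y m ((j : ℕ) + L - l))
        / ∑ m ∈ Finset.range Nd, ∑ l ∈ Finset.Icc ((j : ℕ) + 1) ((j : ℕ) + L), w m l) := by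
  set D : Fin L → ℝ := fun j =>
    ∑ m ∈ Finset.range Nd, ∑ l ∈ Finset.Icc ((j : ℕ) + 1) ((j : ℕ) + L), w m l with hDdef
  set xs : Fin L → ℝ := fun j =>
    (∑ m ∈ Finset.range Nd, ∑ l ∈ Finset.Icc ((j : ℕ) + 1) ((j : ℕ) + L),
      w m l * y m ((j : ℕ) + L - l))
    / ∑ m ∈ Finset.range Nd, ∑ l ∈ Finset.Icc ((j : ℕ) + 1) ((j : ℕ) + L), w m l with hxs
  set c : ℝ := 1 / (2 * σ ^ 2) with hc
  have hcpos : 0 < c := by positivity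
  have hQ : ∀ (x : Fin L → ℝ) (j : Fin L),
      Qj L Nd y w j (x j) = Qj L Nd y w j (xs j) + D j * (x j - xs j) ^ 2 := by
    intro x j
    rw [Qj_expand, Qj_expand]
    exact quad_min _ _ _ (ne_of_gt (hD j)) _
  have master : ∀ x : Fin L → ℝ, emObjective L σ Nd y w x
      = emObjective L σ Nd y w xs - c * ∑ j : Fin L, D j * (x j - xs j) ^ 2 := by
    intro x
    rw [rep, rep]
    rw [Finset.sum_congr rfl (fun j _ => hQ x j), Finset.sum_add_distrib]
    ring
  have hSnonneg : ∀ x : Fin L → ℝ, 0 ≤ ∑ j : Fin L, D j * (x j - xs j) ^ 2 := by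
    intro x
    exact Finset.sum_nonneg fun j _ => mul_nonneg (hD j).le (sq_nonneg _)
  refine ⟨?_, ?_, ?_⟩
  · refine ⟨convex_univ, ?_⟩
    intro u _ v _ a b ha hb hab
    simp only [master u, master v, master (a • u + b • v), smul_eq_mul]
    have hS : ∑ j : Fin L, D j * ((a • u + b • v) j - xs j) ^ 2
        ≤ a * ∑ j : Fin L, D j * (u j - xs j) ^ 2 + b * ∑ j : Fin L, D j * (v j - xs j) ^ 2 := by
      rw [Finset.mul_sum, Finset.mul_sum, ← Finset.sum_add_distrib]
      refine Finset.sum_le_sum fun j _ => ?_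
      simp only [Pi.add_apply, Pi.smul_apply, smul_eq_mul]
      have hid : a * (u j - xs j) ^ 2 + b * (v j - xs j) ^ 2
          - (a * u j + b * v j - xs j) ^ 2 = a * b * (u j - v j) ^ 2 := by
        have hb1 : b = 1 - a := by linarith
        rw [hb1]; ring
      have h7 : (a * u j + b * v j - xs j) ^ 2
          ≤ a * (u j - xs j) ^ 2 + b * (v j - xs j) ^ 2 := by
        nlinarith [hid, mul_nonneg (mul_nonneg ha hb) (sq_nonneg (u j - v j))]
      calc D j * (a * u j + b * v j - xs j) ^ 2
          ≤ D j * (a * (u j - xs j) ^ 2 + b * (v j - xs j) ^ 2) :=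
            mul_le_mul_of_nonneg_left h7 (hD j).le
        _ = a * (D j * (u j - xs j) ^ 2) + b * (D j * (v j - xs j) ^ 2) := by ring
    have h2 := mul_le_mul_of_nonneg_left hS hcpos.le
    have e1 : a * (emObjective L σ Nd y w xs - c * ∑ j : Fin L, D j * (u j - xs j) ^ 2)
        + b * (emObjective L σ Nd y w xs - c * ∑ j : Fin L, D j * (v j - xs j) ^ 2)
        = (a + b) * emObjective L σ Nd y w xs
          - c * (a * ∑ j : Fin L, D j * (u j - xs j) ^ 2
            + b * ∑ j : Fin L, D j * (v j - xs j) ^ 2) := by ring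
    rw [e1, hab, one_mul]
    linarith [h2]
  · intro x
    rw [master x]
    nlinarith [mul_nonneg hcpos.le (hSnonneg x)]
  · intro x hmax
    have h1 := hmax xs
    rw [master x] at h1
    have h2 : ∑ j : Fin L, D j * (x j - xs j) ^ 2 ≤ 0 := by
      by_contra h
      push_neg at h
      nlinarith [mul_pos hcpos h]
    have h3 : ∑ j : Fin L, D j * (x j - xs j) ^ 2 = 0 := le_antisymm h2 (hSnonneg x)
    have h4 := (Finset.sum_eq_zero_iff_of_nonneg
      (fun j _ => mul_nonneg (hD j).le (sq_nonneg (x j - xs j)))).mp h3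
    funext j
    have h5 := h4 j (Finset.mem_univ j)
    have h6 : (x j - xs j) ^ 2 = 0 := by
      rcases mul_eq_zero.mp h5 with h | h
      · exact absurd h (ne_of_gt (hD j))
      · exact h
    have := pow_eq_zero_iff (n := 2) (by norm_num) |>.mp h6
    have := sub_eq_zero.mp this
    exact this
end

section
/- Let L ≥ 1 and let M, N be positive reals. Let ξ : ℕ → [0, ∞) satisfy ξ[l] = 0 for l < L and Σ_{l=0}^∞ ξ[l] = 1. Define α[l₁, l₂] = (M/N) ξ[l₁ − l₂] for L+1 ≤ l₁ ≤ 2L−1 and 1 ≤ l₂ ≤ l₁−L; define α[l] = (M/N) Σ_{j=2L−l}^∞ ξ[j] for 1 ≤ l ≤ L and α[l] = α[2L−l] for L < l ≤ 2L−1; and define ρ₁[i] = (ML/N) ξ[i+L] for 0 ≤ i ≤ L−2. Then Σ_{l=1}^{2L−1} α[l] + Σ_{l₁=L+1}^{2L−1} Σ_{l₂=1}^{l₁−L} α[l₁, l₂] = (2L−1) α[1] + Σ_{i=0}^{L−2} ((i+L)/L) ρ₁[i]. Consequently, for any α[0], the normalization condition α[0] + Σ_{l=1}^{2L−1} α[l]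 + Σ_{l₁=L+1}^{2L−1} Σ_{l₂=1}^{l₁−L} α[l₁, l₂] = 1 holds if and only if α[0] + (2L−1) α[1] + Σ_{i=0}^{L−2} ((i+L)/L) ρ₁[i] = 1. -/
/-- The tail sum `Σ_{j=t}^∞ ξ[j]`. -/
noncomputable def tailSum (ξ : ℕ → ℝ) (t : ℕ) : ℝ :=
  ∑' j : ℕ, if t ≤ j then ξ j else 0

/-- The single-occurrence prior: `α[l] = (M/N) Σ_{j=2L−l}^∞ ξ[j]` for `1 ≤ l ≤ L`, and
`α[l] = α[2L−l] = (M/N) Σ_{j=l}^∞ ξ[j]` for `L < l ≤ 2L−1`. -/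
noncomputable def priorSingle (L : ℕ) (M N : ℝ) (ξ : ℕ → ℝ) (l : ℕ) : ℝ :=
  if l ≤ L then (M / N) * tailSum ξ (2 * L - l) else (M / N) * tailSum ξ l

/-- The double-occurrence prior: `α[l₁,l₂] = (M/N) ξ[l₁−l₂]`. -/
noncomputable def priorDouble (M N : ℝ) (ξ : ℕ → ℝ) (l₁ l₂ : ℕ) : ℝ :=
  (M / N) * ξ (l₁ - l₂)

/-- `ρ₁[i] = (ML/N) ξ[i+L]` for `0 ≤ i ≤ L−2`. -/
noncomputable def rho1 (L : ℕ) (M N : ℝ) (ξ : ℕ → ℝ) (i : ℕ) : ℝ :=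
  (M * L / N) * ξ (i + L)

open Finset

private lemma tailSum_succ (ξ : ℕ → ℝ) (hs : Summable ξ) (t : ℕ) :
    tailSum ξ t = ξ t + tailSum ξ (t + 1) := by
  have h1 : Summable (fun j => if t + 1 ≤ j then ξ j else 0) := by
    refine (hs.indicator (Set.Ici (t + 1))).congr fun j => ?_
    by_cases hj : t + 1 ≤ j <;> simp [Set.indicator_apply, Set.mem_Ici, hj]
  have h2 : Summable (fun j => if j = t then ξ t else 0) :=
    (hasSum_ite_eq t (ξ t)).summable
  have key : ∀ j, (if t ≤ j then ξ j else 0)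
      = (if j = t then ξ t else 0) + (if t + 1 ≤ j then ξ j else 0) := by
    intro j
    rcases eq_or_ne j t with rfl | hj
    · simp
    · by_cases h' : t ≤ j
      · have h'' : t + 1 ≤ j := by omega
        simp [hj, h', h'']
      · have h'' : ¬ (t + 1 ≤ j) := by omega
        simp [hj, h', h'']
  unfold tailSum
  rw [tsum_congr key, Summable.tsum_add h2 h1, tsum_ite_eq]

private lemma sum_tailSum (ξ : ℕ → ℝ) (hs : Summable ξ) (t n : ℕ) :
    ∑ k ∈ range n, tailSum ξ (t + k)
      = n * tailSum ξ (t + n) + ∑ i ∈ range n, ((i : ℝ) + 1) * ξ (t + i) := by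
  induction n with
  | zero => simp
  | succ n ih =>
    rw [sum_range_succ, ih, sum_range_succ, tailSum_succ ξ hs (t + n),
      show t + n + 1 = t + (n + 1) from by omega]
    push_cast; ring

private lemma tri (x : ℕ → ℝ) (n : ℕ) :
    ∑ a ∈ range n, ∑ b ∈ range (a + 1), x b
      = ∑ b ∈ range n, ((n : ℝ) - b) * x b := by
  induction n with
  | zero => simp
  | succ n ih =>
    rw [sum_range_succ, ih]
    have h : ∀ b ∈ range (n + 1), (((n : ℝ) + 1) - b) * x b
        = ((n : ℝ) - b) * x b + x b := by intro b _; ring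
    calc ∑ b ∈ range n, ((n : ℝ) - b) * x b + ∑ b ∈ range (n + 1), x b
        = ∑ b ∈ range (n + 1), (((n : ℝ) - b) * x b) + ∑ b ∈ range (n + 1), x b := by
          rw [sum_range_succ (fun b => ((n : ℝ) - b) * x b) n]; simp
      _ = ∑ b ∈ range (n + 1), ((((n : ℝ) + 1) - b) * x b) := by
          rw [← sum_add_distrib]; exact (sum_congr rfl h).symm
      _ = ∑ b ∈ range (n + 1), (((n + 1 : ℕ) : ℝ) - b) * x b := by
          refine sum_congr rfl fun b _ => ?_; push_cast; ring

/-- Let `L ≥ 1`, let `M, N` be positive reals, and let `ξ : ℕ → [0,∞)` satisfy `ξ[l] = 0` for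
`l < L` and `Σ_l ξ[l] = 1`. With the priors `α[l]`, `α[l₁,l₂]` and `ρ₁[i]` defined as above,
`Σ_{l=1}^{2L−1} α[l] + Σ_{l₁=L+1}^{2L−1} Σ_{l₂=1}^{l₁−L} α[l₁,l₂]
  = (2L−1) α[1] + Σ_{i=0}^{L−2} ((i+L)/L) ρ₁[i]`.
Consequently, for any `α[0]`, the normalization condition
`α[0] + Σ_{l=1}^{2L−1} α[l] + Σ_{l₁,l₂} α[l₁,l₂] = 1` holds if and only if
`α[0] + (2L−1) α[1] + Σ_{i=0}^{L−2} ((i+L)/L) ρ₁[i] = 1`. -/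
theorem em_prior_normalization
    (L : ℕ) (hL : 1 ≤ L) (M N : ℝ) (hM : 0 < M) (hN : 0 < N)
    (ξ : ℕ → ℝ) (hξ0 : ∀ l, 0 ≤ ξ l) (hξL : ∀ l < L, ξ l = 0)
    (hξsum : ∑' l : ℕ, ξ l = 1) :
    ((∑ l ∈ Finset.Icc 1 (2 * L - 1), priorSingle L M N ξ l)
        + (∑ l₁ ∈ Finset.Icc (L + 1) (2 * L - 1), ∑ l₂ ∈ Finset.Icc 1 (l₁ - L),
            priorDouble M N ξ l₁ l₂)
      = (2 * (L : ℝ) - 1) * priorSingle L M N ξ 1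
        + ∑ i ∈ Finset.range (L - 1), (((i : ℝ) + L) / L) * rho1 L M N ξ i) ∧
    (∀ α₀ : ℝ,
      (α₀ + (∑ l ∈ Finset.Icc 1 (2 * L - 1), priorSingle L M N ξ l)
          + (∑ l₁ ∈ Finset.Icc (L + 1) (2 * L - 1), ∑ l₂ ∈ Finset.Icc 1 (l₁ - L),
              priorDouble M N ξ l₁ l₂) = 1)
        ↔ (α₀ + (2 * (L : ℝ) - 1) * priorSingle L M N ξ 1
            + (∑ i ∈ Finset.range (L - 1), (((i : ℝ) + L) / L) * rho1 L M N ξ i) = 1)) := by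
  have hs : Summable ξ := by
    by_contra h
    rw [tsum_eq_zero_of_not_summable h] at hξsum
    norm_num at hξsum
  obtain ⟨n, rfl⟩ : ∃ n, L = n + 1 := ⟨L - 1, by omega⟩
  have key : (∑ l ∈ Finset.Icc 1 (2 * (n+1) - 1), priorSingle (n+1) M N ξ l)
        + (∑ l₁ ∈ Finset.Icc ((n+1) + 1) (2 * (n+1) - 1), ∑ l₂ ∈ Finset.Icc 1 (l₁ - (n+1)),
            priorDouble M N ξ l₁ l₂)
      = (2 * ((n+1 : ℕ) : ℝ) - 1) * priorSingle (n+1) M N ξ 1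
        + ∑ i ∈ Finset.range ((n+1) - 1), (((i : ℝ) + ((n+1 : ℕ) : ℝ)) / ((n+1 : ℕ) : ℝ))
            * rho1 (n+1) M N ξ i := by
    have hIcc : ∀ a b : ℕ, Finset.Icc a b = Finset.Ico a (b + 1) := fun a b =>
      (Finset.Ico_add_one_right_eq_Icc a b).symm
    simp only [hIcc]
    simp only [show 2 * (n+1) - 1 + 1 = 2*n+2 from by omega,
      show (n+1) + 1 = n+2 from by omega, show (n+1) - 1 = n from by omega]
    have h1 : ∑ l ∈ Ico 1 (2*n+2), priorSingle (n+1) M N ξ l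
        = (M/N) * ∑ k ∈ range (n+1), tailSum ξ (n+1+k)
          + (M/N) * ∑ k ∈ range n, tailSum ξ (n+2+k) := by
      rw [← Finset.sum_Ico_consecutive _ (show 1 ≤ n+2 by omega) (show n+2 ≤ 2*n+2 by omega),
        Finset.sum_Ico_eq_sum_range, Finset.sum_Ico_eq_sum_range,
        show n+2-1 = n+1 from by omega, show 2*n+2-(n+2) = n from by omega,
        Finset.mul_sum, Finset.mul_sum]
      congr 1
      · rw [← sum_range_reflect (fun k => (M/N) * tailSum ξ (n+1+k)) (n+1)]
        refine sum_congr rfl fun i hi => ?_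
        simp only [mem_range] at hi
        simp only [priorSingle]
        rw [if_pos (show 1+i ≤ n+1 by omega),
          show 2*(n+1)-(1+i) = n+1+(n+1-1-i) from by omega]
      · refine sum_congr rfl fun i hi => ?_
        simp only [priorSingle]
        rw [if_neg (show ¬ (n+2+i ≤ n+1) by omega)]
    have h2 : ∑ l₁ ∈ Ico (n+2) (2*n+2), ∑ l₂ ∈ Ico 1 (l₁ - (n+1) + 1), priorDouble M N ξ l₁ l₂
        = (M/N) * ∑ b ∈ range n, ((n:ℝ) - b) * ξ (n+1+b) := by
      rw [Finset.sum_Ico_eq_sum_range, show 2*n+2-(n+2) = n from by omega,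
        ← tri (fun b => ξ (n+1+b)) n, Finset.mul_sum]
      refine sum_congr rfl fun a ha => ?_
      rw [show (n+2+a)-(n+1)+1 = a+2 from by omega, Finset.sum_Ico_eq_sum_range,
        show a+2-1 = a+1 from by omega, Finset.mul_sum,
        ← sum_range_reflect (fun b => (M/N) * ξ (n+1+b)) (a+1)]
      refine sum_congr rfl fun b hb => ?_
      simp only [mem_range] at hb
      simp only [priorDouble]
      rw [show (n+2+a) - (1+b) = n+1+(a+1-1-b) from by omega]
    have h3 := sum_tailSum ξ hs (n+1) (n+1)
    rw [show n+1+(n+1) = 2*n+2 from by omega] at h3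
    have h4 := sum_tailSum ξ hs (n+2) n
    rw [show n+2+n = 2*n+2 from by omega] at h4
    have h5 : ∑ i ∈ range n, ((i : ℝ) + 1) * ξ (n+2+i)
        = ∑ i ∈ range (n+1), (i : ℝ) * ξ (n+1+i) := by
      rw [Finset.sum_range_succ' (fun i => (i : ℝ) * ξ (n+1+i)) n]
      simp only [Nat.cast_zero, zero_mul, add_zero]
      refine sum_congr rfl fun i _ => ?_
      rw [show n+1+(i+1) = n+2+i from by omega]
      push_cast; ring
    have h6 : ∑ i ∈ range n, (((i : ℝ) + ((n+1 : ℕ) : ℝ)) / ((n+1 : ℕ) : ℝ))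
          * rho1 (n+1) M N ξ i
        = (M/N) * ∑ i ∈ range n, ((n:ℝ)+1+i) * ξ (n+1+i) := by
      rw [Finset.mul_sum]
      refine sum_congr rfl fun i _ => ?_
      simp only [rho1]
      rw [show i+(n+1) = n+1+i from by omega]
      have hne : ((n:ℝ)+1) ≠ 0 := by positivity
      push_cast
      field_simp
      ring
    have h7 : priorSingle (n+1) M N ξ 1 = (M/N) * (ξ (2*n+1) + tailSum ξ (2*n+2)) := by
      simp only [priorSingle]
      rw [if_pos (show 1 ≤ n+1 by omega), show 2*(n+1)-1 = 2*n+1 from by omega,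
        tailSum_succ ξ hs, show 2*n+1+1 = 2*n+2 from by omega]
    have hcomb : ∑ i ∈ range (n+1), ((i:ℝ)+1) * ξ (n+1+i)
          + ∑ i ∈ range (n+1), (i:ℝ) * ξ (n+1+i)
          + ∑ i ∈ range n, ((n:ℝ) - i) * ξ (n+1+i)
        = (2*(n:ℝ)+1) * ξ (2*n+1) + ∑ i ∈ range n, ((n:ℝ)+1+i) * ξ (n+1+i) := by
      rw [← Finset.sum_add_distrib, Finset.sum_range_succ, add_right_comm,
        ← Finset.sum_add_distrib, show n+1+n = 2*n+1 from by omega]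
      have he : ∑ i ∈ range n, (((i:ℝ)+1) * ξ (n+1+i) + (i:ℝ) * ξ (n+1+i)
            + ((n:ℝ) - i) * ξ (n+1+i))
          = ∑ i ∈ range n, ((n:ℝ)+1+i) * ξ (n+1+i) :=
        sum_congr rfl fun i _ => by ring
      rw [he]
      push_cast; ring
    rw [h1, h2, h3, h4, h5, h6, h7]
    linear_combination (norm := (push_cast; ring1)) (M/N) * hcomb
  refine ⟨key, fun α₀ => ?_⟩
  constructor <;> intro h <;> linarith [key]
end
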